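/- arXiv:1307.2542 — 4 statements merged into one kernel-verified Lean document; each statement's English description precedes it below -/
import Mathlib

section
/- The Lie algebra of the stabilizer in GL(6,ℝ) of the three-form ρ₀ = e^{126} − e^{135} + e^{234} on ℝ⁶ consists exactly of the block matrices [[A, 0],[B, A − tr(A)·I₃]] with A ∈ gl(3,ℝ) and B ∈ sl(3,ℝ). -/
/-- The elementary alternating 3-form `e^{ijk}` on ℝ⁶ (for indices `i j k : Fin 6`),
`e^{ijk}(u,v,w) = det [[uᵢ,uⱼ,uₖ],[vᵢ,vⱼ,vₖ],[wᵢ,wⱼ,wₖ]]`. -/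
noncomputable def e3 (i j k : Fin 6) (u v w : Fin 6 → ℝ) : ℝ :=
  Matrix.det !![u i, u j, u k; v i, v j, v k; w i, w j, w k]

/-- The three-form `ρ₀ = e^{126} − e^{135} + e^{234}` on ℝ⁶ (0-based indices). -/
noncomputable def rho0 (u v w : Fin 6 → ℝ) : ℝ :=
  e3 0 1 5 u v w - e3 0 2 4 u v w + e3 1 2 3 u v w

set_option maxHeartbeats 2000000 in
/-- `X ∈ gl(6,ℝ)` lies in the Lie algebra of the stabilizer of `ρ₀` (i.e. the infinitesimal
action `X.ρ₀` vanishes) if and only if `X` is a block matrix `[[A,0],[B,A − tr(A)·I₃]]`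
with `A ∈ gl(3,ℝ)` and `B ∈ sl(3,ℝ)`. -/
theorem stmt_0 (X : Matrix (Fin 6) (Fin 6) ℝ) :
    (∀ u v w : Fin 6 → ℝ,
        -rho0 (X.mulVec u) v w - rho0 u (X.mulVec v) w - rho0 u v (X.mulVec w) = 0)
    ↔ ∃ A B : Matrix (Fin 3) (Fin 3) ℝ, B.trace = 0 ∧
        X = Matrix.reindex finSumFinEquiv finSumFinEquiv
              (Matrix.fromBlocks A 0 B (A - A.trace • (1 : Matrix (Fin 3) (Fin 3) ℝ))) := by
  have v0 : ((0:Fin 6) : ℕ) = 0 := rfl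
  have v1 : ((1:Fin 6) : ℕ) = 1 := rfl
  have v2 : ((2:Fin 6) : ℕ) = 2 := rfl
  have v3 : ((3:Fin 6) : ℕ) = 3 := rfl
  have v4 : ((4:Fin 6) : ℕ) = 4 := rfl
  have v5 : ((5:Fin 6) : ℕ) = 5 := rfl
  constructor
  · intro h
    have key : ∀ a b c : Fin 6,
        -rho0 (X.mulVec (Pi.single a 1)) (Pi.single b 1) (Pi.single c 1)
        - rho0 (Pi.single a 1) (X.mulVec (Pi.single b 1)) (Pi.single c 1)
        - rho0 (Pi.single a 1) (Pi.single b 1) (X.mulVec (Pi.single c 1)) = 0 :=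
      fun a b c => h _ _ _
    have h012 := key 0 1 2
    have h013 := key 0 1 3
    have h014 := key 0 1 4
    have h015 := key 0 1 5
    have h023 := key 0 2 3
    have h024 := key 0 2 4
    have h025 := key 0 2 5
    have h124 := key 1 2 4
    have h125 := key 1 2 5
    have h123 := key 1 2 3
    have h135 := key 1 3 5
    have h045 := key 0 4 5
    have h234 := key 2 3 4
    have h145 := key 1 4 5
    have h245 := key 2 4 5
    have h035 := key 0 3 5
    have h235 := key 2 3 5
    have h034 := key 0 3 4
    have h134 := key 1 3 4
    simp [rho0, e3, Matrix.mulVec, dotProduct, Fin.sum_univ_six, Pi.single_apply,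
      Matrix.det_fin_three, Matrix.vecHead, Matrix.vecTail]
      at h012 h013 h014 h015 h023
    simp [rho0, e3, Matrix.mulVec, dotProduct, Fin.sum_univ_six, Pi.single_apply,
      Matrix.det_fin_three, Matrix.vecHead, Matrix.vecTail]
      at h024 h025 h124 h125 h123
    simp [rho0, e3, Matrix.mulVec, dotProduct, Fin.sum_univ_six, Pi.single_apply,
      Matrix.det_fin_three, Matrix.vecHead, Matrix.vecTail]
      at h135 h045 h234 h145 h245
    simp [rho0, e3, Matrix.mulVec, dotProduct, Fin.sum_univ_six, Pi.single_apply,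
      Matrix.det_fin_three, Matrix.vecHead, Matrix.vecTail]
      at h035 h235 h034 h134
    refine ⟨!![X 0 0, X 0 1, X 0 2; X 1 0, X 1 1, X 1 2; X 2 0, X 2 1, X 2 2],
            !![X 3 0, X 3 1, X 3 2; X 4 0, X 4 1, X 4 2; X 5 0, X 5 1, X 5 2], ?_, ?_⟩
    · simp [Matrix.trace_fin_three]
      linarith
    · ext i j
      fin_cases i <;> fin_cases j <;>
        norm_num [Matrix.reindex_apply, Matrix.submatrix_apply, finSumFinEquiv, Fin.addCases,
          Fin.castLT, Fin.subNat, Matrix.trace_fin_three, Matrix.one_fin_three,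
          Matrix.sub_apply, Matrix.smul_apply, Matrix.cons_val_two, Matrix.vecHead, Matrix.vecTail] <;>
        (try simp only [Fin.reduceFinMk]) <;>
        first
          | rfl
          | linarith
  · rintro ⟨A, B, hB, rfl⟩
    intro u v w
    have hB' : B 0 0 + B 1 1 + B 2 2 = 0 := by
      simpa [Matrix.trace_fin_three] using hB
    simp [rho0, e3, Matrix.mulVec, dotProduct, Fin.sum_univ_six,
      Matrix.det_fin_three, Matrix.vecHead, Matrix.vecTail,
      Matrix.reindex_apply, Matrix.submatrix_apply, finSumFinEquiv, Fin.addCases,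
      Fin.castLT, Fin.subNat, v0, v1, v2, v3, v4, v5,
      Matrix.trace_fin_three, Matrix.one_fin_three, Matrix.sub_apply, Matrix.smul_apply]
    linear_combination (-(u 0 * (v 1 * w 2 - v 2 * w 1) - u 1 * (v 0 * w 2 - v 2 * w 0)
      + u 2 * (v 0 * w 1 - v 1 * w 0))) * hB'
end

section
/- Let A ∈ gl(3,ℝ) and B ∈ sl(3,ℝ), and set C = [[A,0],[B,A]] ∈ ℝ^{6×6}. Then the Jordan normal form of C cannot consist of Jordan blocks of sizes (3,1,1,1) with all eigenvalues zero; equivalently, it is impossible that C³ = 0, C² ≠ 0 and rank(C) = 2. -/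
open Matrix Module Submodule LinearMap

/-- The 6×6 block matrix [[A,0],[B,A]] built from two 3×3 blocks. -/
noncomputable def blockC (A B : Matrix (Fin 3) (Fin 3) ℝ) : Matrix (Fin 6) (Fin 6) ℝ :=
  Matrix.reindex finSumFinEquiv finSumFinEquiv (Matrix.fromBlocks A 0 B A)

noncomputable def iotaAux : (Fin 3 → ℝ) →ₗ[ℝ] (Fin 3 ⊕ Fin 3 → ℝ) where
  toFun y := Sum.elim 0 y
  map_add' x y := by ext (i | i) <;> simp
  map_smul' c x := by ext (i | i) <;> simp

lemma iotaAux_inj : Function.Injective iotaAux := by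
  intro x y h
  funext i
  exact congrFun h (Sum.inr i)

lemma key_rank (A B : Matrix (Fin 3) (Fin 3) ℝ) :
    A.rank + finrank ℝ
      ↥(Submodule.map B.mulVecLin (ker A.mulVecLin) ⊔ range A.mulVecLin) ≤
      (fromBlocks A 0 B A).rank := by
  classical
  set f := (fromBlocks A 0 B A).mulVecLin with hf
  set π : (Fin 3 ⊕ Fin 3 → ℝ) →ₗ[ℝ] (Fin 3 → ℝ) := LinearMap.funLeft ℝ ℝ Sum.inl with hπ
  set S := Submodule.map B.mulVecLin (ker A.mulVecLin) ⊔ range A.mulVecLin with hS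
  have hcomm : π ∘ₗ f = A.mulVecLin ∘ₗ π := by
    apply LinearMap.ext
    intro x
    have hx : x = Sum.elim (x ∘ Sum.inl) (x ∘ Sum.inr) := (Sum.elim_comp_inl_inr x).symm
    show π (f x) = A.mulVecLin (π x)
    conv_lhs => rw [hx]
    show ((fromBlocks A 0 B A) *ᵥ (Sum.elim (x ∘ Sum.inl) (x ∘ Sum.inr))) ∘ Sum.inl = _
    rw [fromBlocks_mulVec]
    simp only [zero_mulVec, add_zero, Sum.elim_comp_inl]
    rfl
  set g := π.domRestrict (range f) with hg
  have h1 : range g = range A.mulVecLin := by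
    rw [hg, range_domRestrict, ← LinearMap.range_comp, hcomm, LinearMap.range_comp,
      range_eq_top.mpr (LinearMap.funLeft_surjective_of_injective ℝ ℝ _ Sum.inl_injective),
      Submodule.map_top]
  have h2 : Submodule.map iotaAux S ≤ range f ⊓ ker π := by
    rintro _ ⟨z, hz, rfl⟩
    obtain ⟨z₁, hz₁, z₂, hz₂, rfl⟩ := mem_sup.mp hz
    obtain ⟨x, hx, rfl⟩ := hz₁
    obtain ⟨y, rfl⟩ := hz₂
    constructor
    · refine ⟨Sum.elim x y, ?_⟩
      show (fromBlocks A 0 B A) *ᵥ (Sum.elim x y) = _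
      rw [fromBlocks_mulVec]
      have hx0 : A *ᵥ x = 0 := hx
      simp [hx0, iotaAux, mulVecLin_apply]
    · show π (iotaAux _) = 0
      rfl
  have e1 : finrank ℝ ↥(Submodule.map iotaAux S) = finrank ℝ ↥S :=
    (LinearEquiv.finrank_eq (Submodule.equivMapOfInjective iotaAux iotaAux_inj S)).symm
  have e2 : finrank ℝ ↥(Submodule.map iotaAux S) ≤ finrank ℝ ↥(range f ⊓ ker π) :=
    Submodule.finrank_mono h2
  have e3 : finrank ℝ ↥(ker g) = finrank ℝ ↥(range f ⊓ ker π) := by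
    rw [hg, ker_domRestrict]
    have h4 : Submodule.comap (range f).subtype (ker π)
        = Submodule.comap (range f).subtype (range f ⊓ ker π) := by
      rw [Submodule.comap_inf, Submodule.comap_subtype_self, top_inf_eq]
    rw [h4]
    exact LinearEquiv.finrank_eq (Submodule.comapSubtypeEquivOfLe inf_le_left)
  have main : finrank ℝ ↥(range g) + finrank ℝ ↥(ker g) = finrank ℝ ↥(range f) :=
    LinearMap.finrank_range_add_finrank_ker g
  have hrM : (fromBlocks A 0 B A).rank = finrank ℝ ↥(range f) := rfl
  have hrA : A.rank = finrank ℝ ↥(range g) := by rw [h1]; rfl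
  omega

lemma rank_one_decomp (A : Matrix (Fin 3) (Fin 3) ℝ) (hA : A ≠ 0) (h1 : A.rank = 1) :
    ∃ u v : Fin 3 → ℝ, u ≠ 0 ∧ v ≠ 0 ∧ (∀ x, A *ᵥ x = (v ⬝ᵥ x) • u) ∧
      range A.mulVecLin = span ℝ {u} := by
  classical
  have hex : ∃ i j, A i j ≠ 0 := by
    by_contra h
    push_neg at h
    exact hA (by ext i j; simpa using h i j)
  obtain ⟨i0, j0, hij⟩ := hex
  set u : Fin 3 → ℝ := fun i => A i j0 with hu
  have hu0 : u ≠ 0 := fun h => hij (congrFun h i0)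
  have humem : u ∈ range A.mulVecLin := ⟨Pi.single j0 1, by ext i; simp [mulVec_single, hu]⟩
  have hspanle : span ℝ {u} ≤ range A.mulVecLin := by
    rwa [span_singleton_le_iff_mem]
  have hspan : span ℝ {u} = range A.mulVecLin := by
    apply Submodule.eq_of_le_of_finrank_le hspanle
    have : finrank ℝ ↥(range A.mulVecLin) = 1 := h1 ▸ rfl
    rw [this, finrank_span_singleton hu0]
  have hcol : ∀ x : Fin 3 → ℝ, ∃ c : ℝ, c • u = A *ᵥ x := by
    intro x
    have : A *ᵥ x ∈ span ℝ {u} := by rw [hspan]; exact ⟨x, rfl⟩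
    exact mem_span_singleton.mp this
  choose cf hcf using hcol
  have hAuv : ∀ i j, A i j = u i * cf (Pi.single j 1) := by
    intro i j
    have h2 : cf (Pi.single j 1) * u i = A i j := by
      have h3 := congrFun (hcf (Pi.single j 1)) i
      simpa [mulVec_single] using h3
    rw [← h2]; ring
  refine ⟨u, fun j => cf (Pi.single j 1), hu0, ?_, ?_, hspan.symm⟩
  · intro h
    apply hij
    rw [hAuv i0 j0, congrFun h j0, Pi.zero_apply]; ring
  · intro x
    ext i
    simp only [mulVec, dotProduct, Pi.smul_apply, smul_eq_mul]
    rw [Finset.sum_mul]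
    exact Finset.sum_congr rfl fun j _ => by rw [hAuv]; ring

lemma mat_ext_mulVec {X Y : Matrix (Fin 3) (Fin 3) ℝ} (h : ∀ z, X *ᵥ z = Y *ᵥ z) : X = Y := by
  ext i j
  have := congrFun (h (Pi.single j 1)) i
  simpa [mulVec_single] using this

lemma core_alg (A B : Matrix (Fin 3) (Fin 3) ℝ) (u v : Fin 3 → ℝ) (hu0 : u ≠ 0) (hv0 : v ≠ 0)
    (hmv : ∀ x, A *ᵥ x = (v ⬝ᵥ x) • u) (hvu : v ⬝ᵥ u = 0)
    (hBsp : ∀ x, v ⬝ᵥ x = 0 → ∃ t : ℝ, B *ᵥ x = t • u) (hB : B.trace = 0) :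
    A * B + B * A = 0 := by
  obtain ⟨μ0, hμ0⟩ := hBsp u hvu
  set f3 := u ⨯₃ v with hf3
  have hvf : v ⬝ᵥ f3 = 0 := dot_cross_self u v
  obtain ⟨μ3, hμ3⟩ := hBsp f3 hvf
  have huu : u ⬝ᵥ u ≠ 0 := fun h => hu0 (dotProduct_self_eq_zero.mp h)
  have hvv : v ⬝ᵥ v ≠ 0 := fun h => hv0 (dotProduct_self_eq_zero.mp h)
  have hindep : LinearIndependent ℝ ![u, v] := by
    rw [LinearIndependent.pair_iff]
    intro s t hst
    have h1 := congrArg (fun w => w ⬝ᵥ u) hst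
    have h2 := congrArg (fun w => w ⬝ᵥ v) hst
    simp only [add_dotProduct, smul_dotProduct, smul_eq_mul, zero_dotProduct] at h1 h2
    rw [hvu] at h1
    rw [dotProduct_comm u v, hvu, dotProduct_comm v v] at h2
    constructor
    · rcases mul_eq_zero.mp (by linarith : s * (u ⬝ᵥ u) = 0) with h | h
      · exact h
      · exact absurd h huu
    · rcases mul_eq_zero.mp (by linarith : t * (v ⬝ᵥ v) = 0) with h | h
      · exact h
      · exact absurd h hvv
  have hf30 : f3 ≠ 0 := by
    rw [hf3]
    exact crossProduct_ne_zero_iff_linearIndependent.mpr hindep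
  set P : Matrix (Fin 3) (Fin 3) ℝ := Matrix.of fun i j => ![v, u, f3] j i with hP
  have hP0 : ∀ i, P i 0 = v i := fun _ => rfl
  have hP1 : ∀ i, P i 1 = u i := fun _ => rfl
  have hP2 : ∀ i, P i 2 = f3 i := fun _ => rfl
  have hPdet : P.det ≠ 0 := by
    have hdt : P.det = Matrix.det ![v, u, f3] := by
      rw [show P = (Matrix.of ![v, u, f3])ᵀ from rfl, det_transpose]; rfl
    rw [hdt, ← triple_product_eq_det, triple_product_permutation, triple_product_permutation]
    rw [show v ⨯₃ u = -f3 from by rw [hf3, ← cross_anticomm]]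
    rw [dotProduct_neg]
    exact fun h => hf30 (dotProduct_self_eq_zero.mp (by linarith))
  have hPu : IsUnit P.det := isUnit_iff_ne_zero.mpr hPdet
  have hinv : P * P⁻¹ = 1 := mul_nonsing_inv P hPu
  have hinv' : P⁻¹ * P = 1 := nonsing_inv_mul P hPu
  have hPcol : ∀ w : Fin 3 → ℝ, P *ᵥ w = w 0 • v + w 1 • u + w 2 • f3 := by
    intro w; ext i
    simp only [Matrix.mulVec, dotProduct, Fin.sum_univ_three, Pi.add_apply, Pi.smul_apply,
      smul_eq_mul, hP0, hP1, hP2]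
    ring
  set y := P⁻¹ *ᵥ (B *ᵥ v) with hy
  have hBv : B *ᵥ v = y 0 • v + y 1 • u + y 2 • f3 := by
    rw [← hPcol y, hy, mulVec_mulVec, hinv, one_mulVec]
  -- trace computation
  have he0 : P *ᵥ Pi.single (0 : Fin 3) (1 : ℝ) = v := by rw [hPcol]; simp
  have he1 : P *ᵥ Pi.single (1 : Fin 3) (1 : ℝ) = u := by rw [hPcol]; simp
  have he2 : P *ᵥ Pi.single (2 : Fin 3) (1 : ℝ) = f3 := by rw [hPcol]; simp
  have hPinvu : P⁻¹ *ᵥ u = Pi.single (1 : Fin 3) (1 : ℝ) := by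
    rw [← he1, mulVec_mulVec, hinv', one_mulVec]
  have hQ : ∀ j : Fin 3, (P⁻¹ * B * P) *ᵥ Pi.single j 1
      = P⁻¹ *ᵥ (B *ᵥ (P *ᵥ Pi.single j 1)) := by
    intro j; rw [← mulVec_mulVec, ← mulVec_mulVec]
  have col0 : (P⁻¹ * B * P) *ᵥ Pi.single (0 : Fin 3) (1 : ℝ) = y := by rw [hQ, he0, hy]
  have col1 : (P⁻¹ * B * P) *ᵥ Pi.single (1 : Fin 3) (1 : ℝ) = μ0 • (Pi.single (1 : Fin 3) (1 : ℝ) : Fin 3 → ℝ) := by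
    rw [hQ, he1, hμ0, mulVec_smul, hPinvu]
  have col2 : (P⁻¹ * B * P) *ᵥ Pi.single (2 : Fin 3) (1 : ℝ) = μ3 • (Pi.single (1 : Fin 3) (1 : ℝ) : Fin 3 → ℝ) := by
    rw [hQ, he2, hμ3, mulVec_smul, hPinvu]
  have htr : B.trace = (P⁻¹ * B * P).trace := by
    rw [trace_mul_comm (P⁻¹ * B) P, ← Matrix.mul_assoc, hinv, Matrix.one_mul]
  have q00 : (P⁻¹ * B * P) 0 0 = y 0 := by
    have := congrFun col0 0
    simpa [mulVec_single] using this
  have q11 : (P⁻¹ * B * P) 1 1 = μ0 := by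
    have := congrFun col1 1
    simpa [mulVec_single, Pi.single_apply] using this
  have q22 : (P⁻¹ * B * P) 2 2 = 0 := by
    have := congrFun col2 2
    simpa [mulVec_single, Pi.single_apply] using this
  have hy0 : y 0 = -μ0 := by
    rw [htr, trace_fin_three, q00, q11, q22] at hB
    linarith
  -- the three columns of (A*B + B*A) * P vanish
  have hmulBA : ∀ w, (A * B + B * A) *ᵥ w = A *ᵥ (B *ᵥ w) + B *ᵥ (A *ᵥ w) := by
    intro w; rw [add_mulVec, ← mulVec_mulVec, ← mulVec_mulVec]
  have hXv : (A * B + B * A) *ᵥ v = 0 := by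
    have h1 : A *ᵥ (B *ᵥ v) = (y 0 * (v ⬝ᵥ v)) • u := by
      rw [hBv, hmv]
      have hd : v ⬝ᵥ (y 0 • v + y 1 • u + y 2 • f3) = y 0 * (v ⬝ᵥ v) := by
        simp [hvu, hvf]
      rw [hd]
    have h2 : B *ᵥ (A *ᵥ v) = (v ⬝ᵥ v) • (μ0 • u) := by
      rw [hmv, mulVec_smul, hμ0]
    rw [hmulBA, h1, h2, hy0]
    module
  have hXu : (A * B + B * A) *ᵥ u = 0 := by
    have h1 : A *ᵥ (B *ᵥ u) = 0 := by
      rw [hμ0, mulVec_smul, hmv, hvu]; simp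
    have h2 : B *ᵥ (A *ᵥ u) = 0 := by
      rw [hmv, hvu]; simp
    rw [hmulBA, h1, h2, add_zero]
  have hXf : (A * B + B * A) *ᵥ f3 = 0 := by
    have h1 : A *ᵥ (B *ᵥ f3) = 0 := by
      rw [hμ3, mulVec_smul, hmv, hvu]; simp
    have h2 : B *ᵥ (A *ᵥ f3) = 0 := by
      rw [hmv, hvf]; simp
    rw [hmulBA, h1, h2, add_zero]
  apply mat_ext_mulVec
  intro z
  have hz : z = P *ᵥ (P⁻¹ *ᵥ z) := by rw [mulVec_mulVec, hinv, one_mulVec]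
  rw [hz, hPcol (P⁻¹ *ᵥ z)]
  simp [mulVec_add, mulVec_smul, hXv, hXu, hXf]

/-- For `A ∈ gl(3,ℝ)` and `B ∈ sl(3,ℝ)`, the Jordan normal form of `C = [[A,0],[B,A]]`
cannot consist of nilpotent Jordan blocks of sizes (3,1,1,1): it is impossible that
`C³ = 0`, `C² ≠ 0` and `rank C = 2`. -/
theorem stmt_5 (A B : Matrix (Fin 3) (Fin 3) ℝ) (hB : B.trace = 0) :
    ¬ (blockC A B ^ 3 = 0 ∧ blockC A B ^ 2 ≠ 0 ∧ (blockC A B).rank = 2) := by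
  rintro ⟨h3, h2, hr⟩
  set M := Matrix.fromBlocks A 0 B A with hM
  have hpow : ∀ n : ℕ, blockC A B ^ n = Matrix.reindex finSumFinEquiv finSumFinEquiv (M ^ n) := by
    intro n
    have h := map_pow (Matrix.reindexAlgEquiv ℝ ℝ finSumFinEquiv) M n
    simpa [Matrix.reindexAlgEquiv_apply, blockC, hM] using h.symm
  have hinj : ∀ N : Matrix (Fin 3 ⊕ Fin 3) (Fin 3 ⊕ Fin 3) ℝ,
      Matrix.reindex finSumFinEquiv finSumFinEquiv N = 0 → N = 0 := by
    intro N h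
    apply (Matrix.reindex finSumFinEquiv finSumFinEquiv).injective
    rw [h]
    simp
  -- transferred hypotheses
  have e3 : M ^ 3 = 0 := hinj _ (by rw [← hpow]; exact h3)
  have e2 : M ^ 2 ≠ 0 := by
    intro h
    apply h2
    rw [hpow, h]
    simp
  have erk : M.rank = 2 := by
    rw [← hr, blockC, Matrix.reindex_apply, Matrix.rank_submatrix]
  -- block computations
  have hM2 : M ^ 2 = Matrix.fromBlocks (A * A) 0 (B * A + A * B) (A * A) := by
    rw [hM, pow_two, Matrix.fromBlocks_multiply]
    simp
  have hM3 : M ^ 3 = Matrix.fromBlocks (A * A * A) 0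
      ((B * A + A * B) * A + A * A * B) (A * A * A) := by
    rw [pow_succ, hM2, hM, Matrix.fromBlocks_multiply]
    simp [Matrix.mul_assoc]
  have hA3 : A * A * A = 0 := by
    have h := hM3.symm.trans e3
    have h11 := congrArg Matrix.toBlocks₁₁ h
    rwa [Matrix.toBlocks_fromBlocks₁₁, show Matrix.toBlocks₁₁ (0 : Matrix (Fin 3 ⊕ Fin 3) (Fin 3 ⊕ Fin 3) ℝ) = 0 from rfl] at h11
  -- A ≠ 0
  by_cases hA : A = 0
  · apply e2
    rw [hM2, hA]
    simp
  -- rank facts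
  have hkey := key_rank A B
  rw [erk] at hkey
  set S := Submodule.map B.mulVecLin (ker A.mulVecLin) ⊔ range A.mulVecLin with hS
  have hrksub : range A.mulVecLin ≤ S := le_sup_right
  have hArk1 : A.rank = 1 := by
    have hge : 1 ≤ A.rank := by
      by_contra h
      push_neg at h
      interval_cases hh : A.rank
      · apply hA
        have hb : range A.mulVecLin = ⊥ := by
          rw [← Submodule.finrank_eq_zero (R := ℝ)]
          exact hh
        apply mat_ext_mulVec
        intro z
        have : A.mulVecLin z ∈ range A.mulVecLin := mem_range_self _ z
        rw [hb] at this
        simpa using this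
    have hle : A.rank ≤ finrank ℝ ↥S := by
      rw [show A.rank = finrank ℝ ↥(range A.mulVecLin) from rfl]
      exact Submodule.finrank_mono hrksub
    omega
  have hSrk : finrank ℝ ↥S ≤ 1 := by omega
  have hSeq : range A.mulVecLin = S := by
    apply Submodule.eq_of_le_of_finrank_le hrksub
    rw [show finrank ℝ ↥(range A.mulVecLin) = A.rank from rfl, hArk1]
    exact hSrk
  have hmapB : Submodule.map B.mulVecLin (ker A.mulVecLin) ≤ range A.mulVecLin := by
    rw [hSeq]
    exact le_sup_left
  -- rank one decomposition
  obtain ⟨u, v, hu0, hv0, hmv, hspan⟩ := rank_one_decomp A hA hArk1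
  -- v ⬝ᵥ u = 0 from nilpotency
  have hvu : v ⬝ᵥ u = 0 := by
    obtain ⟨j, hj⟩ := Function.ne_iff.mp hv0
    simp only [Pi.zero_apply] at hj
    have h0 : (A * A * A) *ᵥ Pi.single j (1:ℝ) = 0 := by rw [hA3]; exact Matrix.zero_mulVec _
    have h1 : (A * A * A) *ᵥ Pi.single j (1:ℝ) = A *ᵥ (A *ᵥ (A *ᵥ Pi.single j (1:ℝ))) := by
      rw [mulVec_mulVec, mulVec_mulVec]
    have hsj : v ⬝ᵥ Pi.single j (1:ℝ) = v j := by simp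
    have h2 : A *ᵥ (A *ᵥ (A *ᵥ Pi.single j (1:ℝ))) = (v j * (v ⬝ᵥ u) * (v ⬝ᵥ u)) • u := by
      rw [hmv (Pi.single j 1), hsj]
      simp only [mulVec_smul, hmv u, smul_smul]
    have h4 : (v j * (v ⬝ᵥ u) * (v ⬝ᵥ u)) • u = 0 := by rw [← h2, ← h1]; exact h0
    rcases smul_eq_zero.mp h4 with hc | hc
    · rcases mul_eq_zero.mp hc with hc2 | hc2
      · rcases mul_eq_zero.mp hc2 with hc3 | hc3
        · exact absurd hc3 hj
        · exact hc3
      · exact hc2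
    · exact absurd hc hu0
  have hA2 : A * A = 0 := by
    apply mat_ext_mulVec
    intro z
    rw [← mulVec_mulVec]
    simp [hmv, hvu]
  have hBsp : ∀ x, v ⬝ᵥ x = 0 → ∃ t : ℝ, B *ᵥ x = t • u := by
    intro x hx
    have hker : x ∈ ker A.mulVecLin := by
      rw [mem_ker]
      show A *ᵥ x = 0
      rw [hmv, hx]
      simp
    have hmem : B.mulVecLin x ∈ range A.mulVecLin := hmapB ⟨x, hker, rfl⟩
    rw [hspan] at hmem
    obtain ⟨t, ht⟩ := mem_span_singleton.mp hmem
    exact ⟨t, ht.symm⟩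
  have hABBA := core_alg A B u v hu0 hv0 hmv hvu hBsp hB
  apply e2
  rw [hM2, hA2, show B * A + A * B = 0 from by rw [← hABBA, add_comm]]
  exact Matrix.fromBlocks_zero
end

section
/- Let g be the 7-dimensional Lie algebra spanned by f₁,…,f₇ with nonzero brackets [f₃,f₇]=f₁, [f₄,f₇]=f₃, [f₅,f₇]=f₂, [f₆,f₇]=f₅. Then the three-form φ = −f^{156} − f^{236} + f^{245} − (1/2)f^{127} − f^{347} ∈ Λ³g* is closed with respect to the Chevalley–Eilenberg differential. -/
/-- The Lie bracket of the 7-dimensional almost Abelian Lie algebra with nonzero brackets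
`[f₃,f₇]=f₁, [f₄,f₇]=f₃, [f₅,f₇]=f₂, [f₆,f₇]=f₅` (0-based coordinates on ℝ⁷). -/
noncomputable def br (x y : Fin 7 → ℝ) : Fin 7 → ℝ :=
  ![x 2 * y 6 - x 6 * y 2,
    x 4 * y 6 - x 6 * y 4,
    x 3 * y 6 - x 6 * y 3,
    0,
    x 5 * y 6 - x 6 * y 5,
    0, 0]

/-- The elementary alternating 3-form `f^{ijk}` on ℝ⁷. -/
noncomputable def f3 (i j k : Fin 7) (u v w : Fin 7 → ℝ) : ℝ :=
  Matrix.det !![u i, u j, u k; v i, v j, v k; w i, w j, w k]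

/-- The three-form `φ = −f^{156} − f^{236} + f^{245} − (1/2)f^{127} − f^{347}`. -/
noncomputable def phi (u v w : Fin 7 → ℝ) : ℝ :=
  -f3 0 4 5 u v w - f3 1 2 5 u v w + f3 1 3 4 u v w
    - (1 / 2) * f3 0 1 6 u v w - f3 2 3 6 u v w


lemma f3_eq (i j k : Fin 7) (u v w : Fin 7 → ℝ) :
    f3 i j k u v w = u i * (v j * w k - w j * v k) - v i * (u j * w k - w j * u k)
      + w i * (u j * v k - v j * u k) := by
  simp [f3, Matrix.det_fin_three]; ring

lemma br_app (x y : Fin 7 → ℝ) : br x y 0 = x 2 * y 6 - x 6 * y 2 ∧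
    br x y 1 = x 4 * y 6 - x 6 * y 4 ∧ br x y 2 = x 3 * y 6 - x 6 * y 3 ∧
    br x y 3 = 0 ∧ br x y 4 = x 5 * y 6 - x 6 * y 5 ∧ br x y 5 = 0 ∧ br x y 6 = 0 :=
  ⟨rfl, rfl, rfl, rfl, rfl, rfl, rfl⟩

set_option maxHeartbeats 1000000 in
/-- `φ` is closed for the Chevalley–Eilenberg differential:
`(dφ)(x₀,x₁,x₂,x₃) = Σ_{i<j} (−1)^{i+j} φ([xᵢ,xⱼ], …) = 0`. -/
theorem stmt_10 (x₀ x₁ x₂ x₃ : Fin 7 → ℝ) :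
    -phi (br x₀ x₁) x₂ x₃ + phi (br x₀ x₂) x₁ x₃ - phi (br x₀ x₃) x₁ x₂
      - phi (br x₁ x₂) x₀ x₃ + phi (br x₁ x₃) x₀ x₂ - phi (br x₂ x₃) x₀ x₁ = 0 := by
  simp only [phi, f3_eq, (br_app _ _).1, (br_app _ _).2.1,
    (br_app _ _).2.2.1, (br_app _ _).2.2.2.1, (br_app _ _).2.2.2.2.1,
    (br_app _ _).2.2.2.2.2.1, (br_app _ _).2.2.2.2.2.2]
  ring
end

section
/- Let δ ∈ {−1,1}, B = (b_{ij}) ∈ ℝ^{2×2}, v = (v₁,v₂), w ∈ ℝ², N = [[0,δ],[0,0]], J = [[0,1],[−1,0]], and let F ∈ ℝ^{6×6} be the block matrix with rows/columns grouped as (1,1,2,2): F = [[0, −tr(B), vᵗ, wᵗ],[0,0,0,vᵗ],[0, Jv, N, B],[0,0,0,N]]. Then F is nilpotent, and the only possibly nonzero entry of F⁵ is F⁵[1,6] = −v₁³. In particular F⁵ ≠ 0 iff v₁ ≠ 0. -/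
set_option maxHeartbeats 1000000



private lemma cv5 {α : Type*} (x : α) (u : Fin 5 → α) : Matrix.vecCons x u 5 = u 4 := rfl
private lemma cv4 {α : Type*} (x : α) (u : Fin 4 → α) : Matrix.vecCons x u 4 = u 3 := rfl
private lemma cv3 {α : Type*} (x : α) (u : Fin 3 → α) : Matrix.vecCons x u 3 = u 2 := rfl
private lemma cv2 {α : Type*} (x : α) (u : Fin 2 → α) : Matrix.vecCons x u 2 = u 1 := rfl
private lemma cv1 {α : Type*} (x : α) (u : Fin 1 → α) : Matrix.vecCons x u 1 = u 0 := rfl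
private lemma cv0 {α : Type*} (x : α) (u : Fin 0 → α) : Matrix.vecCons x u 0 = x := rfl

/-- The 6×6 block matrix (block sizes 1,1,2,2)
`[[0, −tr B, vᵗ, wᵗ],[0,0,0,vᵗ],[0,Jv,N,B],[0,0,0,N]]` with `N=[[0,δ],[0,0]]`,
`J=[[0,1],[−1,0]]`. -/
noncomputable def Fmat (δ : ℝ) (B : Matrix (Fin 2) (Fin 2) ℝ) (v w : Fin 2 → ℝ) :
    Matrix (Fin 6) (Fin 6) ℝ :=
  !![0, -B.trace, v 0, v 1, w 0, w 1;
     0, 0, 0, 0, v 0, v 1;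
     0, v 1, 0, δ, B 0 0, B 0 1;
     0, -v 0, 0, 0, B 1 0, B 1 1;
     0, 0, 0, 0, 0, δ;
     0, 0, 0, 0, 0, 0]

/-- For `δ ∈ {−1,1}`, `F` is nilpotent and the only possibly nonzero entry of `F⁵` is
`F⁵[1,6] = −v₁³`; in particular `F⁵ ≠ 0` iff `v₁ ≠ 0`. -/
theorem stmt_14 (δ : ℝ) (hδ : δ = 1 ∨ δ = -1) (B : Matrix (Fin 2) (Fin 2) ℝ)
    (v w : Fin 2 → ℝ) :
    IsNilpotent (Fmat δ B v w) ∧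
    Fmat δ B v w ^ 5 = Matrix.single 0 5 (-(v 0) ^ 3) ∧
    (Fmat δ B v w ^ 5 ≠ 0 ↔ v 0 ≠ 0) := by
  have hd2 : δ * δ = 1 := by rcases hδ with h | h <;> rw [h] <;> norm_num
  have h2 : Fmat δ B v w * Fmat δ B v w =
      !![0, 0, 0, δ * v 0, v 1 * B 1 0 - v 0 * B 1 1, -(v 1 * B 0 0) + v 0 * B 0 1 + δ * w 0;
         0, 0, 0, 0, 0, δ * v 0;
         0, -(δ * v 0), 0, 0, v 0 * v 1 + δ * B 1 0, v 1 ^ 2 + δ * B 1 1 + δ * B 0 0;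
         0, 0, 0, 0, -(v 0 ^ 2), -(v 0 * v 1) + δ * B 1 0;
         0, 0, 0, 0, 0, 0;
         0, 0, 0, 0, 0, 0] := by
    ext i j
    fin_cases i <;> fin_cases j <;>
      simp [Fmat, Matrix.mul_apply, Fin.sum_univ_six, cv5, cv4, cv3, cv2, cv1, cv0, Matrix.vecHead, Matrix.vecTail, Matrix.trace_fin_two] <;> ring_nf
  have h3 : (Fmat δ B v w * Fmat δ B v w) * Fmat δ B v w =
      !![0, -(δ * v 0 ^ 2), 0, 0, δ * v 0 * B 1 0, δ * v 1 * B 1 0;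
         0, 0, 0, 0, 0, 0;
         0, 0, 0, 0, -(δ * v 0 ^ 2), δ * δ * B 1 0;
         0, 0, 0, 0, 0, -(δ * v 0 ^ 2);
         0, 0, 0, 0, 0, 0;
         0, 0, 0, 0, 0, 0] := by
    rw [h2]
    ext i j
    fin_cases i <;> fin_cases j <;>
      simp [Fmat, Matrix.mul_apply, Fin.sum_univ_six, cv5, cv4, cv3, cv2, cv1, cv0, Matrix.vecHead, Matrix.vecTail, Matrix.trace_fin_two] <;> ring_nf
  have h5 : Fmat δ B v w ^ 5 = Matrix.single 0 5 (-(v 0) ^ 3) := by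
    have e : Fmat δ B v w ^ 5 =
        ((Fmat δ B v w * Fmat δ B v w) * Fmat δ B v w) * (Fmat δ B v w * Fmat δ B v w) := by
      noncomm_ring
    rw [e, h3, h2]
    ext i j
    fin_cases i <;> fin_cases j <;>
      simp [Matrix.mul_apply, Fin.sum_univ_six, cv5, cv4, cv3, cv2, cv1, cv0, Matrix.vecHead, Matrix.vecTail, Matrix.single] <;>
      first
      | linear_combination (2 * v 0 ^ 3) * hd2
      | linear_combination (-(v 0) ^ 3) * hd2
      | (rcases hδ with rfl | rfl <;> ring)
  have h6 : Fmat δ B v w ^ 6 = 0 := by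
    have e : Fmat δ B v w ^ 6 = Fmat δ B v w ^ 5 * Fmat δ B v w := by noncomm_ring
    rw [e, h5]
    ext i j
    fin_cases i <;> fin_cases j <;>
      simp [Matrix.mul_apply, Fin.sum_univ_six, cv5, cv4, cv3, cv2, cv1, cv0, Matrix.vecHead, Matrix.vecTail, Matrix.single, Fmat]
  refine ⟨⟨6, h6⟩, h5, ?_⟩
  rw [h5]
  constructor
  · intro h hv
    apply h
    ext i j
    simp only [Matrix.single, Matrix.of_apply, Matrix.zero_apply, hv]
    norm_num
  · intro hv h
    have := congrFun (congrFun h 0) 5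
    simp [Matrix.single] at this
    exact hv (by nlinarith [this])
end
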